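/- arXiv:1303.4536 — 6 statements merged into one kernel-verified Lean document; each statement's English description precedes it below -/
import Mathlib

section
/- The array F is an associated magic square of order n: the values F(r,c) for r,c ∈ {1,…,n} are exactly the numbers 1,2,…,n² each occurring once; every row sum, every column sum, and both main diagonal sums equal n(n²+1)/2; and F(r,c) + F(n+1−r, n+1−c) = n²+1 for all r, c ∈ {1,…,n}. -/
/-- Base array of the doubly-even construction: for `1 ≤ k ≤ n/2`,
if `k` is odd then `B r k = (k-1)n + r` and `B r (n+1-k) = 2p - kn + r`;
if `k` is even then `B r k = kn + 1 - r` and `B r (n+1-k) = 2p - (k-1)n + 1 - r`,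
where `p = n²/2`. -/
def B (n r c : ℕ) : ℕ :=
  if c ≤ n / 2 then
    if Odd c then (c - 1) * n + r else c * n + 1 - r
  else
    if Odd (n + 1 - c) then 2 * (n ^ 2 / 2) - (n + 1 - c) * n + r
    else 2 * (n ^ 2 / 2) - (n + 1 - c - 1) * n + 1 - r

/-- The set of rows to be swapped:
`S = {r : 1 ≤ r ≤ n, r even, r ≤ n/2} ∪ {r : 1 ≤ r ≤ n, r odd, n/2 < r ≤ n-1}`. -/
def S (n r : ℕ) : Prop :=
  1 ≤ r ∧ r ≤ n ∧ ((Even r ∧ r ≤ n / 2) ∨ (Odd r ∧ n / 2 < r ∧ r ≤ n - 1))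

instance (n r : ℕ) : Decidable (S n r) := by unfold S; infer_instance

/-- The final array: `F r c = B r (n+1-c)` if `r ∈ S`, and `F r c = B r c` otherwise. -/
def F (n r c : ℕ) : ℕ := if S n r then B n r (n + 1 - c) else B n r c

def G (n r c : ℕ) : ℕ :=
  if (c % 2 = 1 ↔ c ≤ n / 2) then (c - 1) * n + r else c * n + 1 - r

lemma B_eq_G {n r c : ℕ} (hn : n % 2 = 0) (h1 : 1 ≤ c) (h2 : c ≤ n) :
    B n r c = G n r c := by
  obtain ⟨m, rfl⟩ : ∃ m, n = 2 * m := ⟨n / 2, by omega⟩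
  have hm : 2 * m / 2 = m := by omega
  have hsq : 2 * ((2 * m) ^ 2 / 2) = 2 * m * (2 * m) := by
    rw [show (2 * m) ^ 2 = 2 * (2 * m * m) by ring, Nat.mul_div_cancel_left _ two_pos]
    ring
  unfold B G
  simp only [Nat.odd_iff, hm]
  rcases le_or_gt c m with h | h
  · rw [if_pos h]
    by_cases ho : c % 2 = 1
    · rw [if_pos ho, if_pos (by omega)]
    · rw [if_neg ho, if_neg (by omega)]
  · rw [if_neg (by omega)]
    have hle : 2 * m + 1 - c ≤ 2 * m := by omega
    by_cases ho : c % 2 = 1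
    · rw [if_neg (by omega), if_neg (by omega)]
      have h1' : (2 * m + 1 - c - 1) = 2 * m - c := by omega
      rw [h1', hsq]
      have key : 2 * m * (2 * m) - (2 * m - c) * (2 * m) = c * (2 * m) := by
        rw [← Nat.sub_mul, Nat.sub_sub_self (by omega)]
      omega
    · rw [if_pos (by omega), if_pos (by omega), hsq]
      have key : 2 * m * (2 * m) - (2 * m + 1 - c) * (2 * m) = (c - 1) * (2 * m) := by
        rw [← Nat.sub_mul, show 2 * m - (2 * m + 1 - c) = c - 1 by omega]
      omega

lemma F_eq {n r c : ℕ} (hn : n % 2 = 0) (h1 : 1 ≤ c) (h2 : c ≤ n) :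
    F n r c = if S n r then G n r (n + 1 - c) else G n r c := by
  unfold F
  by_cases hs : S n r
  · rw [if_pos hs, if_pos hs, B_eq_G hn (by omega) (by omega)]
  · rw [if_neg hs, if_neg hs, B_eq_G hn h1 h2]

lemma sum_pair (m : ℕ) (f : ℕ → ℕ) :
    ∑ c ∈ Finset.Icc 1 (2 * m), f c
      = ∑ i ∈ Finset.range m, (f (2 * i + 1) + f (2 * i + 2)) := by
  induction m with
  | zero => simp
  | succ k ih =>
    have h1 : 2 * (k + 1) = (2 * k + 1) + 1 := by ring
    rw [h1, Finset.sum_Icc_succ_top (by omega), Finset.sum_Icc_succ_top (by omega), ih,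
      Finset.sum_range_succ]
    ring

lemma S_iff (n r : ℕ) : S n r ↔
    (1 ≤ r ∧ r ≤ n ∧ ((r % 2 = 0 ∧ r ≤ n / 2) ∨ (r % 2 = 1 ∧ n / 2 < r ∧ r ≤ n - 1))) := by
  simp [S, Nat.even_iff, Nat.odd_iff]

lemma sum_range_lin (m a b : ℕ) :
    ∑ i ∈ Finset.range m, (a * i + b) = a * (∑ i ∈ Finset.range m, i) + m * b := by
  rw [Finset.sum_add_distrib, ← Finset.mul_sum, Finset.sum_const, Finset.card_range,
    smul_eq_mul]

lemma row_sum {t r : ℕ} (ht : 1 ≤ t) (hr1 : 1 ≤ r) (hr2 : r ≤ 4 * t) :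
    ∑ c ∈ Finset.Icc 1 (4 * t), G (4 * t) r c = 2 * t * (16 * t ^ 2 + 1) := by
  rw [show (4 * t) = 2 * (2 * t) by ring, sum_pair]
  have hstep : ∀ i ∈ Finset.range (2 * t),
      G (2 * (2 * t)) r (2 * i + 1) + G (2 * (2 * t)) r (2 * i + 2)
        = 16 * t * i + (8 * t + 1) := by
    intro i hi
    simp only [Finset.mem_range] at hi
    have hm : 2 * (2 * t) / 2 = 2 * t := by omega
    unfold G
    rw [hm]
    have hrle : r ≤ 4 * t := hr2
    by_cases hit : i < t
    · rw [if_pos (by omega), if_neg (by omega)]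
      have h1 : r ≤ (2 * i + 2) * (2 * (2 * t)) + 1 :=
        le_trans hr2 (by nlinarith)
      have e : 2 * i + 1 - 1 = 2 * i := by omega
      rw [e]; zify [h1]; ring
    · rw [if_neg (by omega), if_pos (by omega)]
      have h1 : r ≤ (2 * i + 1) * (2 * (2 * t)) + 1 :=
        le_trans hr2 (by nlinarith)
      have e : 2 * i + 2 - 1 = 2 * i + 1 := by omega
      rw [e]; zify [h1]; ring
  rw [Finset.sum_congr rfl hstep, sum_range_lin]
  have hX := Finset.sum_range_id_mul_two (2 * t)
  zify [show (1:ℕ) ≤ 2 * t by omega] at hX ⊢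
  linear_combination (8 * (t:ℤ)) * hX

lemma col_sum {t c : ℕ} (ht : 1 ≤ t) (hc1 : 1 ≤ c) (hc2 : c ≤ 4 * t) :
    ∑ r ∈ Finset.Icc 1 (4 * t),
      (if S (4 * t) r then G (4 * t) r (4 * t + 1 - c) else G (4 * t) r c)
      = 2 * t * (16 * t ^ 2 + 1) := by
  have hm : 4 * t / 2 = 2 * t := by omega
  rw [show (4 * t) = 2 * (2 * t) by ring, sum_pair]
  by_cases hcond : c % 2 = 1 ↔ c ≤ 2 * t
  · -- "increasing" columns
    have hstep : ∀ i ∈ Finset.range (2 * t),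
        ((if S (2 * (2 * t)) (2 * i + 1) then G (2 * (2 * t)) (2 * i + 1) (2 * (2 * t) + 1 - c)
            else G (2 * (2 * t)) (2 * i + 1) c) +
         (if S (2 * (2 * t)) (2 * i + 2) then G (2 * (2 * t)) (2 * i + 2) (2 * (2 * t) + 1 - c)
            else G (2 * (2 * t)) (2 * i + 2) c))
        = 4 * i + ((4 * t - 1) * (4 * t) + 3) := by
      intro i hi
      simp only [Finset.mem_range] at hi
      have e1 : c - 1 + (4 * t - c) = 4 * t - 1 := by omega
      by_cases hit : i < t
      · rw [if_neg (by rw [S_iff]; omega), if_pos (by rw [S_iff]; omega)]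
        unfold G
        rw [if_pos (by omega), if_pos (by omega)]
        have e2 : 2 * (2 * t) + 1 - c - 1 = 4 * t - c := by omega
        rw [e2]
        zify [show 1 ≤ c from hc1, show c ≤ 4 * t from hc2,
          show (1:ℕ) ≤ 4 * t by omega]
        ring
      · rw [if_pos (by rw [S_iff]; omega), if_neg (by rw [S_iff]; omega)]
        unfold G
        rw [if_pos (by omega), if_pos (by omega)]
        have e2 : 2 * (2 * t) + 1 - c - 1 = 4 * t - c := by omega
        rw [e2]
        zify [show 1 ≤ c from hc1, show c ≤ 4 * t from hc2,
          show (1:ℕ) ≤ 4 * t by omega]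
        ring
    rw [Finset.sum_congr rfl hstep, sum_range_lin]
    have hX := Finset.sum_range_id_mul_two (2 * t)
    zify [show (1:ℕ) ≤ 2 * t by omega, show (1:ℕ) ≤ 4 * t by omega] at hX ⊢
    linear_combination (2 : ℤ) * hX
  · -- "decreasing" columns
    have hstep : ∀ i ∈ Finset.range (2 * t),
        ((if S (2 * (2 * t)) (2 * i + 1) then G (2 * (2 * t)) (2 * i + 1) (2 * (2 * t) + 1 - c)
            else G (2 * (2 * t)) (2 * i + 1) c) +
         (if S (2 * (2 * t)) (2 * i + 2) then G (2 * (2 * t)) (2 * i + 2) (2 * (2 * t) + 1 - c)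
            else G (2 * (2 * t)) (2 * i + 2) c))
        = 4 * (2 * t - 1 - i) + (16 * t ^ 2 - 4 * t + 3) := by
      intro i hi
      simp only [Finset.mem_range] at hi
      have hc' : 1 ≤ 2 * (2 * t) + 1 - c := by omega
      have hbb : 2 * i + 2 ≤ 2 * (2 * t) := by omega
      have hb1 : 2 * i + 1 ≤ c * (2 * (2 * t)) + 1 :=
        le_trans (by omega) (le_trans (Nat.le_mul_of_pos_left _ hc1) (Nat.le_add_right _ _))
      have hb1' : 2 * i + 2 ≤ c * (2 * (2 * t)) + 1 :=
        le_trans hbb (le_trans (Nat.le_mul_of_pos_left _ hc1) (Nat.le_add_right _ _))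
      have hb2 : 2 * i + 1 ≤ (2 * (2 * t) + 1 - c) * (2 * (2 * t)) + 1 :=
        le_trans (by omega) (le_trans (Nat.le_mul_of_pos_left _ hc') (Nat.le_add_right _ _))
      have hb2' : 2 * i + 2 ≤ (2 * (2 * t) + 1 - c) * (2 * (2 * t)) + 1 :=
        le_trans hbb (le_trans (Nat.le_mul_of_pos_left _ hc') (Nat.le_add_right _ _))
      by_cases hit : i < t
      · rw [if_neg (by rw [S_iff]; omega), if_pos (by rw [S_iff]; omega)]
        unfold G
        rw [if_neg (by omega), if_neg (by omega)]
        zify [show 1 ≤ c from hc1, show c ≤ 4 * t from hc2, show c ≤ 2 * (2 * t) + 1 by omega, hb1, hb1', hb2, hb2',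
          show i ≤ 2 * t - 1 by omega, show (1:ℕ) ≤ 2 * t by omega,
          show 4 * t ≤ 16 * t ^ 2 by nlinarith, show (4:ℕ) * t ≤ 4 * t + 3 by omega]
        ring
      · rw [if_pos (by rw [S_iff]; omega), if_neg (by rw [S_iff]; omega)]
        unfold G
        rw [if_neg (by omega), if_neg (by omega)]
        zify [show 1 ≤ c from hc1, show c ≤ 4 * t from hc2, show c ≤ 2 * (2 * t) + 1 by omega, hb1, hb1', hb2, hb2',
          show i ≤ 2 * t - 1 by omega, show (1:ℕ) ≤ 2 * t by omega,
          show 4 * t ≤ 16 * t ^ 2 by nlinarith, show (4:ℕ) * t ≤ 4 * t + 3 by omega]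
        ring
    rw [Finset.sum_congr rfl hstep,
      Finset.sum_range_reflect (fun j => 4 * j + (16 * t ^ 2 - 4 * t + 3)) (2 * t),
      sum_range_lin]
    have hX := Finset.sum_range_id_mul_two (2 * t)
    zify [show (1:ℕ) ≤ 2 * t by omega, show 4 * t ≤ 16 * t ^ 2 by nlinarith,
      show (4:ℕ) * t ≤ 4 * t + 3 by omega] at hX ⊢
    linear_combination (2 : ℤ) * hX

lemma sum_ite_range (t A Bv : ℕ) :
    ∑ i ∈ Finset.range (2 * t), (if i < t then A else Bv) = t * A + t * Bv := by
  rw [Finset.sum_ite, Finset.sum_const, Finset.sum_const]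
  have h1 : (Finset.range (2 * t)).filter (fun i => i < t) = Finset.range t := by
    ext x; simp; omega
  have h2 : (Finset.range (2 * t)).filter (fun i => ¬ i < t) = Finset.Ico t (2 * t) := by
    ext x; simp; omega
  rw [h1, h2, Finset.card_range, Nat.card_Ico, smul_eq_mul, smul_eq_mul]
  have : 2 * t - t = t := by omega
  rw [this]

lemma diag_sum {t : ℕ} (ht : 1 ≤ t) :
    ∑ r ∈ Finset.Icc 1 (4 * t),
      (if S (4 * t) r then G (4 * t) r (4 * t + 1 - r) else G (4 * t) r r)
      = 2 * t * (16 * t ^ 2 + 1) := by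
  have hm : 4 * t / 2 = 2 * t := by omega
  rw [show (4 * t) = 2 * (2 * t) by ring, sum_pair]
  have hstep : ∀ i ∈ Finset.range (2 * t),
      ((if S (2 * (2 * t)) (2 * i + 1) then
          G (2 * (2 * t)) (2 * i + 1) (2 * (2 * t) + 1 - (2 * i + 1))
        else G (2 * (2 * t)) (2 * i + 1) (2 * i + 1)) +
       (if S (2 * (2 * t)) (2 * i + 2) then
          G (2 * (2 * t)) (2 * i + 2) (2 * (2 * t) + 1 - (2 * i + 2))
        else G (2 * (2 * t)) (2 * i + 2) (2 * i + 2)))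
      = if i < t then (4 * t - 1) * (4 * t) else (4 * t + 1) * (4 * t) + 2 := by
    intro i hi
    simp only [Finset.mem_range] at hi
    by_cases hit : i < t
    · rw [if_pos hit, if_neg (by rw [S_iff]; omega), if_pos (by rw [S_iff]; omega)]
      rw [show 2 * (2 * t) + 1 - (2 * i + 2) = 4 * t - 1 - 2 * i by omega]
      unfold G
      rw [if_pos (by omega), if_neg (by omega),
        show 2 * i + 1 - 1 = 2 * i by omega]
      have hb : 2 * i + 2 ≤ (4 * t - 1 - 2 * i) * (2 * (2 * t)) + 1 := by
        have h1 : 1 ≤ 4 * t - 1 - 2 * i := by omega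
        calc 2 * i + 2 ≤ 2 * (2 * t) := by omega
          _ ≤ (4 * t - 1 - 2 * i) * (2 * (2 * t)) := Nat.le_mul_of_pos_left _ h1
          _ ≤ _ := Nat.le_add_right _ _
      zify [hb, show 2 * i ≤ 4 * t - 1 by omega, show (1:ℕ) ≤ 4 * t by omega,
        show (1:ℕ) ≤ 2 * t by omega]
      ring
    · rw [if_neg hit, if_pos (by rw [S_iff]; omega), if_neg (by rw [S_iff]; omega)]
      rw [show 2 * (2 * t) + 1 - (2 * i + 1) = 4 * t - 2 * i by omega]
      unfold G
      rw [if_neg (by omega), if_pos (by omega),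
        show 2 * i + 2 - 1 = 2 * i + 1 by omega]
      have hb : 2 * i + 1 ≤ (4 * t - 2 * i) * (2 * (2 * t)) + 1 := by
        have h1 : 1 ≤ 4 * t - 2 * i := by omega
        calc 2 * i + 1 ≤ 2 * (2 * t) := by omega
          _ ≤ (4 * t - 2 * i) * (2 * (2 * t)) := Nat.le_mul_of_pos_left _ h1
          _ ≤ _ := Nat.le_add_right _ _
      zify [hb, show 2 * i ≤ 4 * t by omega, show (1:ℕ) ≤ 4 * t by omega]
      ring
  rw [Finset.sum_congr rfl hstep, sum_ite_range]
  zify [show (1:ℕ) ≤ 4 * t by omega]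
  ring

lemma antidiag_sum {t : ℕ} (ht : 1 ≤ t) :
    ∑ r ∈ Finset.Icc 1 (4 * t),
      (if S (4 * t) r then G (4 * t) r r else G (4 * t) r (4 * t + 1 - r))
      = 2 * t * (16 * t ^ 2 + 1) := by
  have hm : 4 * t / 2 = 2 * t := by omega
  rw [show (4 * t) = 2 * (2 * t) by ring, sum_pair]
  have hstep : ∀ i ∈ Finset.range (2 * t),
      ((if S (2 * (2 * t)) (2 * i + 1) then G (2 * (2 * t)) (2 * i + 1) (2 * i + 1)
        else G (2 * (2 * t)) (2 * i + 1) (2 * (2 * t) + 1 - (2 * i + 1))) +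
       (if S (2 * (2 * t)) (2 * i + 2) then G (2 * (2 * t)) (2 * i + 2) (2 * i + 2)
        else G (2 * (2 * t)) (2 * i + 2) (2 * (2 * t) + 1 - (2 * i + 2))))
      = if i < t then (4 * t + 1) * (4 * t) else (4 * t - 1) * (4 * t) + 2 := by
    intro i hi
    simp only [Finset.mem_range] at hi
    by_cases hit : i < t
    · rw [if_pos hit, if_neg (by rw [S_iff]; omega), if_pos (by rw [S_iff]; omega)]
      rw [show 2 * (2 * t) + 1 - (2 * i + 1) = 4 * t - 2 * i by omega]
      unfold G
      rw [if_pos (by omega), if_neg (by omega),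
        show 4 * t - 2 * i - 1 = 4 * t - 1 - 2 * i by omega]
      have hb : 2 * i + 2 ≤ (2 * i + 2) * (2 * (2 * t)) + 1 := by nlinarith
      zify [hb, show 2 * i ≤ 4 * t - 1 by omega, show (1:ℕ) ≤ 4 * t by omega,
        show (1:ℕ) ≤ 2 * t by omega, show 2 * i ≤ 4 * t by omega]
      ring
    · rw [if_neg hit, if_pos (by rw [S_iff]; omega), if_neg (by rw [S_iff]; omega)]
      rw [show 2 * (2 * t) + 1 - (2 * i + 2) = 4 * t - 1 - 2 * i by omega]
      unfold G
      rw [if_neg (by omega), if_pos (by omega),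
        show 4 * t - 1 - 2 * i - 1 = 4 * t - 2 - 2 * i by omega]
      have hb : 2 * i + 1 ≤ (2 * i + 1) * (2 * (2 * t)) + 1 := by nlinarith
      zify [hb, show 2 * i ≤ 4 * t - 2 by omega, show (2:ℕ) ≤ 4 * t by omega,
        show (1:ℕ) ≤ 4 * t by omega]
      ring
  rw [Finset.sum_congr rfl hstep, sum_ite_range]
  zify [show (1:ℕ) ≤ 4 * t by omega]
  ring

lemma S_reflect {t r : ℕ} (ht : 1 ≤ t) (hr1 : 1 ≤ r) (hr2 : r ≤ 4 * t) :
    S (4 * t) (4 * t + 1 - r) ↔ S (4 * t) r := by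
  rw [S_iff, S_iff]; omega

lemma G_assoc {t r c : ℕ} (ht : 1 ≤ t) (hr1 : 1 ≤ r) (hr2 : r ≤ 4 * t)
    (hc1 : 1 ≤ c) (hc2 : c ≤ 4 * t) :
    G (4 * t) r c + G (4 * t) (4 * t + 1 - r) (4 * t + 1 - c) = (4 * t) ^ 2 + 1 := by
  have hm : 4 * t / 2 = 2 * t := by omega
  unfold G
  by_cases hcond : c % 2 = 1 ↔ c ≤ 2 * t
  · rw [if_pos (by omega), if_pos (by omega),
      show 4 * t + 1 - c - 1 = 4 * t - c by omega]
    zify [hc2, hr2, show 1 ≤ c from hc1, show (1:ℕ) ≤ 4 * t by omega,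
      show r ≤ 4 * t + 1 by omega, show c ≤ 4 * t + 1 by omega]
    ring
  · rw [if_neg (by omega), if_neg (by omega)]
    have hb1 : r ≤ c * (4 * t) + 1 :=
      le_trans hr2 (le_trans (Nat.le_mul_of_pos_left _ hc1) (Nat.le_add_right _ _))
    have hb2 : 4 * t + 1 - r ≤ (4 * t + 1 - c) * (4 * t) + 1 := by
      have h1 : 1 ≤ 4 * t + 1 - c := by omega
      calc 4 * t + 1 - r ≤ 4 * t := by omega
        _ ≤ (4 * t + 1 - c) * (4 * t) := Nat.le_mul_of_pos_left _ h1
        _ ≤ _ := Nat.le_add_right _ _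
    zify [hb1, hb2, hr2, hc2, show c ≤ 4 * t + 1 by omega, show r ≤ 4 * t + 1 by omega]
    ring

lemma G_bounds {n r c : ℕ} (hr1 : 1 ≤ r) (hr2 : r ≤ n) (hc1 : 1 ≤ c) (hc2 : c ≤ n) :
    1 ≤ G n r c ∧ G n r c ≤ n ^ 2 := by
  unfold G
  have hnn : n ^ 2 = n * n := sq n
  split_ifs
  · constructor
    · omega
    · have h1 : (c - 1) * n ≤ (n - 1) * n := Nat.mul_le_mul_right _ (by omega)
      have h2 : (n - 1) * n + n = n * n := by zify [show 1 ≤ n by omega]; ring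
      omega
  · have h1 : n ≤ c * n := Nat.le_mul_of_pos_left _ hc1
    have h2 : c * n ≤ n * n := Nat.mul_le_mul_right _ hc2
    omega

/-- Row component of the inverse map of `F`. -/
def Finvr (n v : ℕ) : ℕ :=
  if ((v - 1) / n + 1) % 2 = 1 ↔ (v - 1) / n + 1 ≤ n / 2 then (v - 1) % n + 1
  else n + 1 - ((v - 1) % n + 1)

/-- Inverse map of `F` on the square. -/
def Finv (n v : ℕ) : ℕ × ℕ :=
  (Finvr n v, if S n (Finvr n v) then n + 1 - ((v - 1) / n + 1) else (v - 1) / n + 1)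

lemma G_divmod {n r c : ℕ} (hn : 0 < n) (hr1 : 1 ≤ r) (hr2 : r ≤ n)
    (hc1 : 1 ≤ c) (hc2 : c ≤ n) :
    (G n r c - 1) / n + 1 = c ∧
    (G n r c - 1) % n + 1 = if (c % 2 = 1 ↔ c ≤ n / 2) then r else n + 1 - r := by
  unfold G
  split_ifs with h
  · have e : (c - 1) * n + r - 1 = n * (c - 1) + (r - 1) := by
      rw [mul_comm]; omega
    rw [e, Nat.mul_add_div hn, Nat.mul_add_mod, Nat.div_eq_of_lt (by omega),
      Nat.mod_eq_of_lt (by omega)]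
    omega
  · have hb : n ≤ n * c := Nat.le_mul_of_pos_right _ hc1
    have h3 : n * (c - 1) + n = n * c := by
      zify [show 1 ≤ c from hc1]; ring
    have e : c * n + 1 - r - 1 = n * (c - 1) + (n - r) := by
      rw [mul_comm c n]; omega
    rw [e, Nat.mul_add_div hn, Nat.mul_add_mod, Nat.div_eq_of_lt (by omega),
      Nat.mod_eq_of_lt (by omega)]
    omega

lemma Finvr_G {n r c : ℕ} (hn : 0 < n) (hr1 : 1 ≤ r) (hr2 : r ≤ n)
    (hc1 : 1 ≤ c) (hc2 : c ≤ n) : Finvr n (G n r c) = r := by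
  obtain ⟨hd, hmd⟩ := G_divmod hn hr1 hr2 hc1 hc2
  unfold Finvr
  rw [hd, hmd]
  split_ifs <;> omega

lemma Finv_F {n r c : ℕ} (hn : n % 2 = 0) (hpos : 0 < n) (hr1 : 1 ≤ r) (hr2 : r ≤ n)
    (hc1 : 1 ≤ c) (hc2 : c ≤ n) : Finv n (F n r c) = (r, c) := by
  have key : ∀ c', 1 ≤ c' → c' ≤ n → Finv n (G n r c') = (r, if S n r then n + 1 - c' else c') := by
    intro c' h1 h2
    obtain ⟨hd, hmd⟩ := G_divmod hpos hr1 hr2 h1 h2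
    have hrr : Finvr n (G n r c') = r := Finvr_G hpos hr1 hr2 h1 h2
    unfold Finv
    rw [hrr, hd]
  rw [F_eq hn hc1 hc2]
  by_cases hs : S n r
  · rw [if_pos hs, key (n + 1 - c) (by omega) (by omega), if_pos hs]
    have : n + 1 - (n + 1 - c) = c := by omega
    rw [this]
  · rw [if_neg hs, key c hc1 hc2, if_neg hs]

lemma F_Finv {n v : ℕ} (hn : n % 2 = 0) (hpos : 0 < n) (hv1 : 1 ≤ v) (hv2 : v ≤ n ^ 2) :
    F n (Finv n v).1 (Finv n v).2 = v := by
  have hnn : n ^ 2 = n * n := sq n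
  obtain ⟨D, hD⟩ : ∃ D, (v - 1) / n = D := ⟨_, rfl⟩
  obtain ⟨M, hM⟩ : ∃ M, (v - 1) % n = M := ⟨_, rfl⟩
  have hcs2 : D < n := by rw [← hD]; exact Nat.div_lt_of_lt_mul (by omega)
  have hq2 : M < n := by rw [← hM]; exact Nat.mod_lt _ hpos
  have hdm : D * n + M = v - 1 := by rw [← hD, ← hM]; exact Nat.div_add_mod' _ _
  have hrval : Finvr n v = if (D + 1) % 2 = 1 ↔ D + 1 ≤ n / 2
      then M + 1 else n + 1 - (M + 1) := by
    unfold Finvr; rw [hD, hM]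
  have hcsn : (D + 1) * n = D * n + n := by rw [add_one_mul]
  have hGv : G n (Finvr n v) (D + 1) = v := by
    unfold G
    by_cases hcond : (D + 1) % 2 = 1 ↔ D + 1 ≤ n / 2
    · rw [if_pos hcond, hrval, if_pos hcond, Nat.add_sub_cancel]
      omega
    · rw [if_neg hcond, hrval, if_neg hcond]
      omega
  have hrb1 : 1 ≤ Finvr n v := by rw [hrval]; split_ifs <;> omega
  have hrb2 : Finvr n v ≤ n := by rw [hrval]; split_ifs <;> omega
  have h1 : (Finv n v).1 = Finvr n v := rfl
  have h2 : (Finv n v).2 = if S n (Finvr n v) then n + 1 - (D + 1)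
      else D + 1 := by
    unfold Finv; rw [hD]
  have hb1 : 1 ≤ n + 1 - (D + 1) := by omega
  have hb2 : n + 1 - (D + 1) ≤ n := by omega
  have hb3 : n + 1 - (n + 1 - (D + 1)) = D + 1 := by omega
  have hb4 : 1 ≤ D + 1 := by omega
  have hb5 : D + 1 ≤ n := by omega
  rw [h1, h2]
  by_cases hs : S n (Finvr n v)
  · rw [if_pos hs, F_eq hn hb1 hb2, if_pos hs, hb3, hGv]
  · rw [if_neg hs, F_eq hn hb4 hb5, if_neg hs, hGv]

lemma sum_Icc_reflect (n : ℕ) (f : ℕ → ℕ) :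
    ∑ c ∈ Finset.Icc 1 n, f (n + 1 - c) = ∑ c ∈ Finset.Icc 1 n, f c := by
  refine Finset.sum_nbij' (fun c => n + 1 - c) (fun c => n + 1 - c) ?_ ?_ ?_ ?_ ?_ <;>
    intro a ha <;> simp only [Finset.mem_Icc] at * <;> first | omega | rfl


/-- `F` is an associated magic square of order `n`: its values on `{1,…,n}²` are exactly
`1,…,n²` each once; every row, column and both main diagonals sum to `n(n²+1)/2`;
and `F r c + F (n+1-r) (n+1-c) = n² + 1` for all `r, c ∈ {1,…,n}`. -/
theorem doubly_even_is_associated_magic_square (n : ℕ) (h4 : n % 4 = 0) (hn : 4 ≤ n) :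
    Set.BijOn (fun rc : ℕ × ℕ => F n rc.1 rc.2)
      (Set.Icc 1 n ×ˢ Set.Icc 1 n) (Set.Icc 1 (n ^ 2)) ∧
    (∀ r ∈ Finset.Icc 1 n, ∑ c ∈ Finset.Icc 1 n, F n r c = n * (n ^ 2 + 1) / 2) ∧
    (∀ c ∈ Finset.Icc 1 n, ∑ r ∈ Finset.Icc 1 n, F n r c = n * (n ^ 2 + 1) / 2) ∧
    (∑ r ∈ Finset.Icc 1 n, F n r r = n * (n ^ 2 + 1) / 2) ∧
    (∑ r ∈ Finset.Icc 1 n, F n r (n + 1 - r) = n * (n ^ 2 + 1) / 2) ∧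
    (∀ r ∈ Set.Icc 1 n, ∀ c ∈ Set.Icc 1 n,
      F n r c + F n (n + 1 - r) (n + 1 - c) = n ^ 2 + 1) := by
  obtain ⟨t, rfl⟩ : ∃ t, n = 4 * t := ⟨n / 4, by omega⟩
  have ht : 1 ≤ t := by omega
  have hev : (4 * t) % 2 = 0 := by omega
  have hpos : 0 < 4 * t := by omega
  have hhalf : 4 * t * ((4 * t) ^ 2 + 1) / 2 = 2 * t * (16 * t ^ 2 + 1) := by
    rw [show 4 * t * ((4 * t) ^ 2 + 1) = 2 * (2 * t * (16 * t ^ 2 + 1)) by ring,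
      Nat.mul_div_cancel_left _ two_pos]
  refine ⟨?_, ?_, ?_, ?_, ?_, ?_⟩
  · -- bijectivity
    have hmapsF : Set.MapsTo (fun rc : ℕ × ℕ => F (4 * t) rc.1 rc.2)
        (Set.Icc 1 (4 * t) ×ˢ Set.Icc 1 (4 * t)) (Set.Icc 1 ((4 * t) ^ 2)) := by
      rintro ⟨r, c⟩ hm
      simp only [Set.mem_prod, Set.mem_Icc] at hm
      obtain ⟨⟨hr1, hr2⟩, hc1, hc2⟩ := hm
      simp only [Set.mem_Icc]
      rw [F_eq hev hc1 hc2]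
      split_ifs
      · exact G_bounds hr1 hr2 (by omega) (by omega)
      · exact G_bounds hr1 hr2 hc1 hc2
    have hmapsI : Set.MapsTo (Finv (4 * t)) (Set.Icc 1 ((4 * t) ^ 2))
        (Set.Icc 1 (4 * t) ×ˢ Set.Icc 1 (4 * t)) := by
      intro v hv
      simp only [Set.mem_Icc] at hv
      obtain ⟨hv1, hv2⟩ := hv
      have hnn : (4 * t) ^ 2 = (4 * t) * (4 * t) := sq _
      have hcs2 : (v - 1) / (4 * t) < 4 * t := Nat.div_lt_of_lt_mul (by omega)
      have hq2 : (v - 1) % (4 * t) < 4 * t := Nat.mod_lt _ hpos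
      have hrb1 : 1 ≤ Finvr (4 * t) v ∧ Finvr (4 * t) v ≤ 4 * t := by
        unfold Finvr; split_ifs <;> omega
      obtain ⟨D, hD⟩ : ∃ D, (v - 1) / (4 * t) = D := ⟨_, rfl⟩
      rw [hD] at hcs2
      simp only [Set.mem_prod, Set.mem_Icc]
      refine ⟨⟨hrb1.1, hrb1.2⟩, ?_⟩
      have h2 : (Finv (4 * t) v).2 = if S (4 * t) (Finvr (4 * t) v)
          then 4 * t + 1 - (D + 1) else D + 1 := by
        unfold Finv; rw [hD]
      rw [h2]; split_ifs <;> omega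
    exact Set.InvOn.bijOn
      ⟨fun rc hm => by
        simp only [Set.mem_prod, Set.mem_Icc] at hm
        exact Finv_F hev hpos hm.1.1 hm.1.2 hm.2.1 hm.2.2,
       fun v hv => by
        simp only [Set.mem_Icc] at hv
        exact F_Finv hev hpos hv.1 hv.2⟩
      hmapsF hmapsI
  · -- row sums
    intro r hr
    rw [Finset.mem_Icc] at hr
    rw [hhalf, Finset.sum_congr rfl
      (fun c hc => F_eq hev (Finset.mem_Icc.mp hc).1 (Finset.mem_Icc.mp hc).2)]
    by_cases hs : S (4 * t) r
    · simp only [if_pos hs]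
      rw [sum_Icc_reflect (4 * t) (fun c => G (4 * t) r c)]
      exact row_sum ht hr.1 hr.2
    · simp only [if_neg hs]
      exact row_sum ht hr.1 hr.2
  · -- column sums
    intro c hc
    rw [Finset.mem_Icc] at hc
    rw [hhalf, Finset.sum_congr rfl
      (fun r hr => F_eq hev hc.1 hc.2)]
    exact col_sum ht hc.1 hc.2
  · -- main diagonal
    rw [hhalf, Finset.sum_congr rfl
      (fun r hr => F_eq hev (Finset.mem_Icc.mp hr).1 (Finset.mem_Icc.mp hr).2)]
    exact diag_sum ht
  · -- antidiagonal
    have hstep : ∀ r ∈ Finset.Icc 1 (4 * t), F (4 * t) r (4 * t + 1 - r)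
        = if S (4 * t) r then G (4 * t) r r else G (4 * t) r (4 * t + 1 - r) := by
      intro r hr
      rw [Finset.mem_Icc] at hr
      have hb1 : 1 ≤ 4 * t + 1 - r := by omega
      have hb2 : 4 * t + 1 - r ≤ 4 * t := by omega
      have hb3 : 4 * t + 1 - (4 * t + 1 - r) = r := by omega
      rw [F_eq hev hb1 hb2, hb3]
    rw [hhalf, Finset.sum_congr rfl hstep]
    exact antidiag_sum ht
  · -- associated property
    intro r hr c hc
    simp only [Set.mem_Icc] at hr hc
    have hb1 : 1 ≤ 4 * t + 1 - c := by omega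
    have hb2 : 4 * t + 1 - c ≤ 4 * t := by omega
    rw [F_eq hev hc.1 hc.2, F_eq hev hb1 hb2]
    by_cases hs : S (4 * t) r
    · have hb3 : 4 * t + 1 - (4 * t + 1 - c) = c := by omega
      rw [if_pos hs, if_pos ((S_reflect ht hr.1 hr.2).mpr hs), hb3]
      have hG := G_assoc ht hr.1 hr.2 hb1 hb2
      rwa [hb3] at hG
    · rw [if_neg hs, if_neg (fun h => hs ((S_reflect ht hr.1 hr.2).mp h))]
      exact G_assoc ht hr.1 hr.2 hc.1 hc.2
end

section
/- For every column index c ∈ {1,…,n}, the column sum ∑_{r=1}^{n} F(r,c) equals n(n²+1)/2. -/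
lemma gauss2 (t : ℕ) : 2 * ∑ i ∈ Finset.Icc 1 t, i = t * (t + 1) := by
  induction t with
  | zero => simp
  | succ k ih =>
      rw [Finset.sum_Icc_succ_top (by omega : 1 ≤ k + 1)]
      zify at ih ⊢
      linear_combination ih

lemma sum_shift (T : Finset ℕ) (a : ℕ) : ∑ r ∈ T, (a + r) = T.card * a + ∑ r ∈ T, r := by
  rw [Finset.sum_add_distrib, Finset.sum_const, smul_eq_mul]

lemma sum_flip (T : Finset ℕ) (M E : ℕ) (hT : ∀ r ∈ T, r ≤ M) (hM : M ≤ E) :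
    (∑ r ∈ T, (E + 1 - r)) + ∑ r ∈ T, r = T.card * (E + 1) := by
  rw [← Finset.sum_add_distrib,
    Finset.sum_congr rfl (fun r hr => show E + 1 - r + r = E + 1 by have := hT r hr; omega),
    Finset.sum_const, smul_eq_mul]

/-- Every column of `F` sums to `n(n²+1)/2`. -/
theorem doubly_even_column_sums (n : ℕ) (h4 : n % 4 = 0) (hn : 4 ≤ n) :
    ∀ c ∈ Finset.Icc 1 n, ∑ r ∈ Finset.Icc 1 n, F n r c = n * (n ^ 2 + 1) / 2 := by
  intro c hc
  rw [Finset.mem_Icc] at hc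
  obtain ⟨t, rfl⟩ : ∃ t, n = 4 * t := ⟨n / 4, by omega⟩
  have ht : 1 ≤ t := by omega
  obtain ⟨hc1, hc4⟩ := hc
  simp only [F, Finset.sum_ite]
  set A := (Finset.Icc 1 (4 * t)).filter (fun r => S (4 * t) r) with hAdef
  set A' := (Finset.Icc 1 (4 * t)).filter (fun r => ¬ S (4 * t) r) with hA'def
  have hA : A = (Finset.Icc 1 t).image (fun i => 2 * i) ∪
      (Finset.Icc 1 t).image (fun i => 2 * t + 2 * i - 1) := by
    ext x
    simp only [hAdef, Finset.mem_filter, Finset.mem_Icc, Finset.mem_union, Finset.mem_image,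
      S, Nat.even_iff, Nat.odd_iff]
    constructor
    · rintro ⟨⟨h1, h2⟩, h1', h2', h⟩
      rcases h with ⟨he, hle⟩ | ⟨ho, hgt, hle⟩
      · exact Or.inl ⟨x / 2, ⟨by omega, by omega⟩, by omega⟩
      · exact Or.inr ⟨(x + 1 - 2 * t) / 2, ⟨by omega, by omega⟩, by omega⟩
    · rintro (⟨i, hi, rfl⟩ | ⟨i, hi, rfl⟩) <;>
        exact ⟨⟨by omega, by omega⟩, by omega, by omega, by omega⟩
  have hdisj : Disjoint ((Finset.Icc 1 t).image (fun i => 2 * i))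
      ((Finset.Icc 1 t).image (fun i => 2 * t + 2 * i - 1)) := by
    simp only [Finset.disjoint_left, Finset.mem_image, Finset.mem_Icc]
    rintro a ⟨i, hi, rfl⟩ ⟨j, hj, hj'⟩
    omega
  have hinj1 : ∀ x ∈ Finset.Icc 1 t, ∀ y ∈ Finset.Icc 1 t,
      2 * x = 2 * y → x = y := fun x _ y _ h => by omega
  have hinj2 : ∀ x ∈ Finset.Icc 1 t, ∀ y ∈ Finset.Icc 1 t,
      2 * t + 2 * x - 1 = 2 * t + 2 * y - 1 → x = y := fun x hx y hy h => by
    rw [Finset.mem_Icc] at hx hy; omega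
  have hcardA : A.card = 2 * t := by
    rw [hA, Finset.card_union_of_disjoint hdisj, Finset.card_image_of_injOn hinj1,
      Finset.card_image_of_injOn hinj2, Nat.card_Icc]
    omega
  have hg : 2 * ∑ i ∈ Finset.Icc 1 t, i = t * (t + 1) := gauss2 t
  have hsumA : ∑ r ∈ A, r = 4 * t ^ 2 + t := by
    rw [hA, Finset.sum_union hdisj, Finset.sum_image hinj1, Finset.sum_image hinj2,
      Finset.sum_congr rfl (fun i hi => show 2 * t + 2 * i - 1 = (2 * t - 1) + 2 * i by
        rw [Finset.mem_Icc] at hi; omega),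
      Finset.sum_add_distrib, Finset.sum_const, smul_eq_mul, Nat.card_Icc,
      show (∑ i ∈ Finset.Icc 1 t, 2 * i) = 2 * ∑ i ∈ Finset.Icc 1 t, i from
        (Finset.mul_sum _ _ _).symm]
    zify [show 1 ≤ t + 1 by omega, show 1 ≤ 2 * t by omega] at hg ⊢
    linear_combination 2 * hg
  have hcardA' : A'.card = 2 * t := by
    have := Finset.card_filter_add_card_filter_not
      (s := Finset.Icc 1 (4 * t)) (p := fun r => S (4 * t) r)
    rw [← hAdef, ← hA'def, Nat.card_Icc] at this
    omega
  have hsumA' : ∑ r ∈ A', r = 4 * t ^ 2 + t := by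
    have h2 := Finset.sum_filter_add_sum_filter_not (Finset.Icc 1 (4 * t))
      (fun r => S (4 * t) r) (fun r => r)
    rw [← hAdef, ← hA'def] at h2
    have hStot : ∑ x ∈ Finset.Icc 1 (4 * t), x = 8 * t ^ 2 + 2 * t :=
      Nat.eq_of_mul_eq_mul_left (show 0 < 2 by norm_num)
        ((gauss2 (4 * t)).trans (by ring))
    omega
  have hp : 2 * ((4 * t) ^ 2 / 2) = 4 * t * (4 * t) := by
    rw [show (4 * t) ^ 2 = 2 * (8 * (t * t)) by ring, Nat.mul_div_cancel_left _ (by norm_num)]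
    ring
  have hMA : ∀ r ∈ A, r ≤ 4 * t := fun r hr =>
    (Finset.mem_Icc.mp (Finset.mem_filter.mp hr).1).2
  have hMA' : ∀ r ∈ A', r ≤ 4 * t := fun r hr =>
    (Finset.mem_Icc.mp (Finset.mem_filter.mp hr).1).2
  rw [show 4 * t * ((4 * t) ^ 2 + 1) / 2 = 2 * t * (16 * t ^ 2 + 1) from by
    rw [show 4 * t * ((4 * t) ^ 2 + 1) = 2 * (2 * t * (16 * t ^ 2 + 1)) by ring,
      Nat.mul_div_cancel_left _ (by norm_num)]]
  rcases Nat.even_or_odd c with hce | hco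
  · -- c even
    have hnotodd : ¬ Odd c := by simp [Nat.not_odd_iff_even.mpr hce]
    by_cases hc2 : c ≤ 2 * t
    · -- Case II : c ≤ 2t, c even
      rw [Finset.sum_congr rfl (fun r hr =>
          show B (4 * t) r (4 * t + 1 - c) = (4 * t + 1 - c) * (4 * t) + 1 - r by
        unfold B
        rw [if_neg (by omega), show 4 * t + 1 - (4 * t + 1 - c) = c from by omega,
          if_neg hnotodd, hp, ← Nat.sub_mul, show 4 * t - (c - 1) = 4 * t + 1 - c from by omega]),
        Finset.sum_congr rfl (fun r hr => show B (4 * t) r c = c * (4 * t) + 1 - r by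
          unfold B
          rw [if_pos (by omega), if_neg hnotodd])]
      have f1 := sum_flip A (4 * t) ((4 * t + 1 - c) * (4 * t)) hMA
        (Nat.le_mul_of_pos_left (4 * t) (by omega : 0 < 4 * t + 1 - c))
      have f2 := sum_flip A' (4 * t) (c * (4 * t)) hMA'
        (Nat.le_mul_of_pos_left (4 * t) (by omega : 0 < c))
      rw [hcardA, hsumA] at f1
      rw [hcardA', hsumA'] at f2
      set X := ∑ r ∈ A, ((4 * t + 1 - c) * (4 * t) + 1 - r) with hX
      set Y := ∑ r ∈ A', (c * (4 * t) + 1 - r) with hY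
      zify [hc1, hc4, show c ≤ 4 * t + 1 from by omega] at f1 f2 ⊢
      linear_combination f1 + f2
    · -- Case III : c > 2t, c even
      have hodd' : Odd (4 * t + 1 - c) := by
        rw [Nat.odd_iff]; rw [Nat.even_iff] at hce; omega
      rw [Finset.sum_congr rfl (fun r hr =>
          show B (4 * t) r (4 * t + 1 - c) = (4 * t - c) * (4 * t) + r by
        unfold B
        rw [if_pos (by omega), if_pos hodd',
          show 4 * t + 1 - c - 1 = 4 * t - c from by omega]),
        Finset.sum_congr rfl (fun r hr => show B (4 * t) r c = (c - 1) * (4 * t) + r by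
          unfold B
          rw [if_neg (by omega), if_pos hodd', hp, ← Nat.sub_mul,
            show 4 * t - (4 * t + 1 - c) = c - 1 from by omega]),
        sum_shift, sum_shift, hcardA, hcardA', hsumA, hsumA']
      zify [hc1, hc4]
      ring
  · -- c odd
    have hc1' : Odd c := hco
    by_cases hc2 : c ≤ 2 * t
    · -- Case I : c ≤ 2t, c odd
      rw [Finset.sum_congr rfl (fun r hr =>
          show B (4 * t) r (4 * t + 1 - c) = (4 * t - c) * (4 * t) + r by
        unfold B
        rw [if_neg (by omega), show 4 * t + 1 - (4 * t + 1 - c) = c from by omega,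
          if_pos hco, hp, ← Nat.sub_mul]),
        Finset.sum_congr rfl (fun r hr => show B (4 * t) r c = (c - 1) * (4 * t) + r by
          unfold B
          rw [if_pos (by omega), if_pos hco]),
        sum_shift, sum_shift, hcardA, hcardA', hsumA, hsumA']
      zify [hc1, hc4]
      ring
    · -- Case IV : c > 2t, c odd
      have hnotodd' : ¬ Odd (4 * t + 1 - c) := by
        rw [Nat.odd_iff] at hco ⊢; omega
      rw [Finset.sum_congr rfl (fun r hr =>
          show B (4 * t) r (4 * t + 1 - c) = (4 * t + 1 - c) * (4 * t) + 1 - r by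
        unfold B
        rw [if_pos (by omega), if_neg hnotodd']),
        Finset.sum_congr rfl (fun r hr => show B (4 * t) r c = c * (4 * t) + 1 - r by
          unfold B
          rw [if_neg (by omega), if_neg hnotodd',
            show 4 * t + 1 - c - 1 = 4 * t - c from by omega, hp, ← Nat.sub_mul,
            show 4 * t - (4 * t - c) = c from by omega])]
      have f1 := sum_flip A (4 * t) ((4 * t + 1 - c) * (4 * t)) hMA
        (Nat.le_mul_of_pos_left (4 * t) (by omega : 0 < 4 * t + 1 - c))
      have f2 := sum_flip A' (4 * t) (c * (4 * t)) hMA'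
        (Nat.le_mul_of_pos_left (4 * t) (by omega : 0 < c))
      rw [hcardA, hsumA] at f1
      rw [hcardA', hsumA'] at f2
      set X := ∑ r ∈ A, ((4 * t + 1 - c) * (4 * t) + 1 - r) with hX
      set Y := ∑ r ∈ A', (c * (4 * t) + 1 - r) with hY
      zify [hc1, hc4, show c ≤ 4 * t + 1 from by omega] at f1 f2 ⊢
      linear_combination f1 + f2
end

section
/- The array F is associated: for all r, c ∈ {1,…,n}, F(r,c) + F(n+1−r, n+1−c) = n² + 1. -/
lemma two_mul_half_sq {n : ℕ} (he : n % 2 = 0) : 2 * (n ^ 2 / 2) = n ^ 2 := by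
  have h2 : (2 : ℕ) ∣ n := Nat.dvd_of_mod_eq_zero he
  exact Nat.mul_div_cancel' (h2.pow (by norm_num))

lemma B_sum (n r c : ℕ) (he : n % 2 = 0) (hr1 : 1 ≤ r) (hr2 : r ≤ n)
    (hc1 : 1 ≤ c) (hc2 : c ≤ n / 2) :
    B n r c + B n (n + 1 - r) (n + 1 - c) = n ^ 2 + 1 := by
  have hm : n / 2 * 2 = n := Nat.div_mul_cancel (Nat.dvd_of_mod_eq_zero he)
  have hc2' : ¬ (n + 1 - c ≤ n / 2) := by omega
  have hcc : n + 1 - (n + 1 - c) = c := by omega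
  unfold B
  rw [if_pos hc2, if_neg hc2', hcc, two_mul_half_sq he]
  have hA1 : n ≤ c * n := Nat.le_mul_of_pos_left n (by omega)
  have hA2 : c * n ≤ n ^ 2 := by
    calc c * n ≤ n * n := Nat.mul_le_mul_right n (by omega)
    _ = n ^ 2 := (sq n).symm
  have hA3 : (c - 1) * n = c * n - n := by rw [Nat.sub_mul, one_mul]
  simp only [Nat.odd_iff]
  rcases Nat.mod_two_eq_zero_or_one c with h | h
  · rw [if_neg (by omega), if_neg (by omega), hA3]
    generalize c * n = A at *
    generalize n ^ 2 = N at *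
    omega
  · rw [if_pos h, if_pos h, hA3]
    generalize c * n = A at *
    generalize n ^ 2 = N at *
    omega

lemma S_iff_s4 (n r : ℕ) (he : n % 2 = 0) (hn : 4 ≤ n) (hr1 : 1 ≤ r) (hr2 : r ≤ n) :
    S n r ↔ S n (n + 1 - r) := by
  unfold S
  simp only [Nat.even_iff, Nat.odd_iff]
  omega

/-- `F` is associated: `F r c + F (n+1-r) (n+1-c) = n² + 1` for all `r, c ∈ {1,…,n}`. -/
theorem doubly_even_associated (n : ℕ) (h4 : n % 4 = 0) (hn : 4 ≤ n) :
    ∀ r ∈ Set.Icc 1 n, ∀ c ∈ Set.Icc 1 n,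
      F n r c + F n (n + 1 - r) (n + 1 - c) = n ^ 2 + 1 := by
  have he : n % 2 = 0 := by omega
  intro r hr c hc
  simp only [Set.mem_Icc] at hr hc
  obtain ⟨hr1, hr2⟩ := hr
  obtain ⟨hc1, hc2⟩ := hc
  have hm : n / 2 * 2 = n := Nat.div_mul_cancel (Nat.dvd_of_mod_eq_zero he)
  have key : ∀ a b : ℕ, 1 ≤ a → a ≤ n → 1 ≤ b → b ≤ n →
      B n a b + B n (n + 1 - a) (n + 1 - b) = n ^ 2 + 1 := by
    intro a b h1 h2 h3 h4'
    rcases le_or_gt b (n / 2) with h | h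
    · exact B_sum n a b he h1 h2 h3 h
    · have := B_sum n (n + 1 - a) (n + 1 - b) he (by omega) (by omega) (by omega) (by omega)
      rw [show n + 1 - (n + 1 - a) = a by omega, show n + 1 - (n + 1 - b) = b by omega] at this
      omega
  unfold F
  by_cases hs : S n r
  · rw [if_pos hs, if_pos ((S_iff_s4 n r he hn hr1 hr2).mp hs)]
    exact key r (n + 1 - c) hr1 hr2 (by omega) (by omega)
  · rw [if_neg hs, if_neg (fun h => hs ((S_iff_s4 n r he hn hr1 hr2).mpr h))]
    exact key r c hr1 hr2 hc1 hc2
end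

section
/- Both main diagonals of F have the magic sum: ∑_{r=1}^{n} F(r,r) = n(n²+1)/2 and ∑_{r=1}^{n} F(r, n+1−r) = n(n²+1)/2. -/
set_option maxHeartbeats 1000000 in
lemma pair1 (n r : ℕ) (h4 : n % 4 = 0) (hn : 4 ≤ n) (h1 : 1 ≤ r) (hr : r ≤ n / 2) :
    F n r r + F n (n + 1 - r) (n + 1 - r) = n ^ 2 + 1 := by
  obtain ⟨k, rfl⟩ : ∃ k, n = 4 * k := ⟨n / 4, by omega⟩
  have hk : 1 ≤ k := by omega
  have h16 : 2 * ((4 * k) ^ 2 / 2) = 16 * (k * k) := by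
    have : (4 * k) ^ 2 = 16 * (k * k) := by ring
    omega
  have hsq : (4 * k) ^ 2 = 16 * (k * k) := by ring
  have h3 : k ≤ k * k := Nat.le_mul_of_pos_left k hk
  have h4' : k ≤ r * k := Nat.le_mul_of_pos_left k h1
  have hA : r * k ≤ 2 * (k * k) := by
    have hr2 : r ≤ 2 * k := by omega
    calc r * k ≤ 2 * k * k := Nat.mul_le_mul_right k hr2
    _ = 2 * (k * k) := by ring
  unfold F S B
  simp only [Nat.odd_iff, Nat.even_iff, hsq]
  split_ifs <;> try omega
  all_goals (simp only [Nat.sub_mul]; ring_nf at h3 h4' hA h16 ⊢; omega)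

set_option maxHeartbeats 1000000 in
lemma pair2 (n r : ℕ) (h4 : n % 4 = 0) (hn : 4 ≤ n) (h1 : 1 ≤ r) (hr : r ≤ n / 2) :
    F n r (n + 1 - r) + F n (n + 1 - r) r = n ^ 2 + 1 := by
  obtain ⟨k, rfl⟩ : ∃ k, n = 4 * k := ⟨n / 4, by omega⟩
  have hk : 1 ≤ k := by omega
  have h16 : 2 * ((4 * k) ^ 2 / 2) = 16 * (k * k) := by
    have : (4 * k) ^ 2 = 16 * (k * k) := by ring
    omega
  have hsq : (4 * k) ^ 2 = 16 * (k * k) := by ring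
  have h3 : k ≤ k * k := Nat.le_mul_of_pos_left k hk
  have h4' : k ≤ r * k := Nat.le_mul_of_pos_left k h1
  have hA : r * k ≤ 2 * (k * k) := by
    have hr2 : r ≤ 2 * k := by omega
    calc r * k ≤ 2 * k * k := Nat.mul_le_mul_right k hr2
    _ = 2 * (k * k) := by ring
  unfold F S B
  simp only [Nat.odd_iff, Nat.even_iff, hsq]
  split_ifs <;> try omega
  all_goals (simp only [Nat.sub_mul]; ring_nf at h3 h4' hA h16 ⊢; omega)

lemma sum_pair_s5 (n : ℕ) (hn : n % 2 = 0) (f : ℕ → ℕ) (C : ℕ)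
    (h : ∀ r, 1 ≤ r → r ≤ n / 2 → f r + f (n + 1 - r) = C) :
    ∑ r ∈ Finset.Icc 1 n, f r = n / 2 * C := by
  have h1 : Finset.Icc 1 n = Finset.Ioc 0 n := rfl
  rw [h1, ← Finset.sum_Ioc_consecutive f (Nat.zero_le (n / 2)) (Nat.div_le_self n 2)]
  have h2 : ∑ r ∈ Finset.Ioc (n / 2) n, f r = ∑ r ∈ Finset.Ioc 0 (n / 2), f (n + 1 - r) := by
    apply Finset.sum_nbij' (i := fun r => n + 1 - r) (j := fun r => n + 1 - r) <;>
      intros <;> simp only [Finset.mem_Ioc] at * <;> first | omega | (congr 1; omega)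
  rw [h2, ← Finset.sum_add_distrib]
  rw [Finset.sum_congr rfl fun r hr => by
    simp only [Finset.mem_Ioc] at hr; exact h r hr.1 hr.2]
  simp [mul_comm]

lemma half_magic (n X : ℕ) (hn : n % 2 = 0) : n / 2 * X = n * X / 2 := by
  obtain ⟨m, rfl⟩ : ∃ m, n = 2 * m := ⟨n / 2, by omega⟩
  rw [show 2 * m / 2 = m from by omega, show 2 * m * X = 2 * (m * X) from by ring,
    Nat.mul_div_cancel_left _ (by norm_num : 0 < 2)]

/-- Both main diagonals of `F` have the magic sum `n(n²+1)/2`. -/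
theorem doubly_even_diagonal_sums (n : ℕ) (h4 : n % 4 = 0) (hn : 4 ≤ n) :
    (∑ r ∈ Finset.Icc 1 n, F n r r = n * (n ^ 2 + 1) / 2) ∧
    (∑ r ∈ Finset.Icc 1 n, F n r (n + 1 - r) = n * (n ^ 2 + 1) / 2) := by
  constructor
  · rw [sum_pair_s5 n (by omega) (fun r => F n r r) (n ^ 2 + 1)
      (fun r h1 hr => pair1 n r h4 hn h1 hr)]
    exact half_magic n (n ^ 2 + 1) (by omega)
  · rw [sum_pair_s5 n (by omega) (fun r => F n r (n + 1 - r)) (n ^ 2 + 1)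
      (fun r h1 hr => by
        show F n r (n + 1 - r) + F n (n + 1 - r) (n + 1 - (n + 1 - r)) = n ^ 2 + 1
        rw [show n + 1 - (n + 1 - r) = r from by omega]
        exact pair2 n r h4 hn h1 hr)]
    exact half_magic n (n ^ 2 + 1) (by omega)
end

section
/- Let n ∈ ℕ with n ≡ 0 (mod 4), p = n²/2, m = n/2, and let r ∈ ℕ with 1 ≤ r ≤ n. Then ∑_{k odd, 1 ≤ k ≤ m} [((k−1)n + r) + (2p − kn + r)] + ∑_{k even, 1 ≤ k ≤ m} [(kn − (r−1)) + (2p − (k−1)n − (r−1))] = m(2p + 1), which equals n(n²+1)/2. -/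
lemma icc_step (t : ℕ) :
    Finset.Icc 1 (2 * (t + 1)) = insert (2 * t + 2) (insert (2 * t + 1) (Finset.Icc 1 (2 * t))) := by
  ext k
  simp only [Finset.mem_Icc, Finset.mem_insert]
  omega

lemma card_odd (t : ℕ) : ((Finset.Icc 1 (2 * t)).filter (fun k => Odd k)).card = t := by
  induction t with
  | zero => simp
  | succ t ih =>
    rw [icc_step, Finset.filter_insert, Finset.filter_insert]
    have h1 : ¬ Odd (2 * t + 2) := by simp [Nat.odd_iff, Nat.add_mod, Nat.mul_mod]
    have h2 : Odd (2 * t + 1) := ⟨t, by ring⟩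
    rw [if_neg h1, if_pos h2, Finset.card_insert_of_notMem, ih]
    simp only [Finset.mem_filter, Finset.mem_Icc]
    omega

lemma card_even (t : ℕ) : ((Finset.Icc 1 (2 * t)).filter (fun k => Even k)).card = t := by
  induction t with
  | zero => simp
  | succ t ih =>
    rw [icc_step, Finset.filter_insert, Finset.filter_insert]
    have h1 : Even (2 * t + 2) := ⟨t + 1, by ring⟩
    have h2 : ¬ Even (2 * t + 1) := by simp [Nat.even_iff, Nat.add_mod, Nat.mul_mod]
    rw [if_pos h1, if_neg h2, Finset.card_insert_of_notMem, ih]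
    simp only [Finset.mem_filter, Finset.mem_Icc]
    omega

/-- Row-sum identity for the intermediate square of the doubly-even construction:
with `p = n²/2` and `m = n/2`, for any row `r` with `1 ≤ r ≤ n`,
`∑_{k odd, 1 ≤ k ≤ m} [((k-1)n + r) + (2p - kn + r)]
 + ∑_{k even, 1 ≤ k ≤ m} [(kn - (r-1)) + (2p - (k-1)n - (r-1))] = m(2p + 1) = n(n²+1)/2`. -/
theorem row_sum_identity (n r : ℕ) (h4 : n % 4 = 0) (hr1 : 1 ≤ r) (hrn : r ≤ n) :
    (∑ k ∈ (Finset.Icc 1 (n / 2)).filter (fun k => Odd k),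
        (((k - 1) * n + r) + (2 * (n ^ 2 / 2) - k * n + r))) +
    (∑ k ∈ (Finset.Icc 1 (n / 2)).filter (fun k => Even k),
        ((k * n - (r - 1)) + (2 * (n ^ 2 / 2) - (k - 1) * n - (r - 1))))
      = (n / 2) * (2 * (n ^ 2 / 2) + 1) ∧
    (n / 2) * (2 * (n ^ 2 / 2) + 1) = n * (n ^ 2 + 1) / 2 := by
  obtain ⟨t, rfl⟩ : ∃ t, n = 4 * t := ⟨n / 4, by omega⟩
  have hm : 4 * t / 2 = 2 * t := by omega
  have hp : (4 * t) ^ 2 / 2 = 8 * t ^ 2 := by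
    rw [show (4 * t) ^ 2 = 2 * (8 * t ^ 2) by ring, Nat.mul_div_cancel_left _ two_pos]
  have ht : t ≤ t ^ 2 := by nlinarith
  rw [hm, hp]
  have hodd : ∀ k ∈ (Finset.Icc 1 (2 * t)).filter (fun k => Odd k),
      ((k - 1) * (4 * t) + r) + (2 * (8 * t ^ 2) - k * (4 * t) + r)
        = 16 * t ^ 2 - 4 * t + 2 * r := by
    intro k hk
    simp only [Finset.mem_filter, Finset.mem_Icc] at hk
    obtain ⟨⟨hk1, hk2⟩, _⟩ := hk
    have hkt : k * (4 * t) ≤ 2 * t * (4 * t) := Nat.mul_le_mul_right _ hk2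
    have hsub : (k - 1) * (4 * t) = k * (4 * t) - 4 * t := by
      rw [Nat.sub_mul, one_mul]
    rw [hsub]
    have h4t : 4 * t ≤ k * (4 * t) := by
      calc 4 * t = 1 * (4 * t) := by ring
        _ ≤ k * (4 * t) := Nat.mul_le_mul_right _ hk1
    have h2t : 2 * t * (4 * t) = 8 * t ^ 2 := by ring
    generalize k * (4 * t) = a at *
    generalize t ^ 2 = s at *
    omega
  have heven : ∀ k ∈ (Finset.Icc 1 (2 * t)).filter (fun k => Even k),
      (k * (4 * t) - (r - 1)) + (2 * (8 * t ^ 2) - (k - 1) * (4 * t) - (r - 1))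
        = 16 * t ^ 2 + 4 * t - 2 * r + 2 := by
    intro k hk
    simp only [Finset.mem_filter, Finset.mem_Icc] at hk
    obtain ⟨⟨hk1, hk2⟩, hke⟩ := hk
    have hk2' : 2 ≤ k := by
      rcases Nat.even_iff.mp hke with h
      omega
    have hkt : k * (4 * t) ≤ 2 * t * (4 * t) := Nat.mul_le_mul_right _ hk2
    have hsub : (k - 1) * (4 * t) = k * (4 * t) - 4 * t := by
      rw [Nat.sub_mul, one_mul]
    rw [hsub]
    have h4t : 2 * (4 * t) ≤ k * (4 * t) := Nat.mul_le_mul_right _ hk2'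
    have h2t : 2 * t * (4 * t) = 8 * t ^ 2 := by ring
    generalize k * (4 * t) = a at *
    generalize t ^ 2 = s at *
    omega
  rw [Finset.sum_congr rfl hodd, Finset.sum_congr rfl heven,
    Finset.sum_const, Finset.sum_const, card_odd, card_even, smul_eq_mul, smul_eq_mul]
  constructor
  · have key : (16 * t ^ 2 - 4 * t + 2 * r) + (16 * t ^ 2 + 4 * t - 2 * r + 2)
        = 32 * t ^ 2 + 2 := by
      have : 4 * t ≤ 16 * t ^ 2 := by nlinarith
      omega
    rw [← Nat.mul_add, key]
    ring
  · have : (4 * t) * ((4 * t) ^ 2 + 1) = 2 * (2 * t * (2 * (8 * t ^ 2) + 1)) := by ring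
    rw [this, Nat.mul_div_cancel_left _ two_pos]
end

section
/- Let n ∈ ℕ with n ≡ 0 (mod 4), p = n²/2, m = n/2, and let k ∈ ℕ with 1 ≤ k ≤ m. Then ∑_{i=1}^{n/4} [(k−1)n + (2i−1)] + ∑_{i=1}^{n/4} [2p − kn + 2i] + ∑_{i=1}^{n/4} [2p − (k−1)n − (2i−1)] + ∑_{i=1}^{n/4} [kn − (2i−2)] = m(2p + 1), which equals n(n²+1)/2. -/
/-- Column-sum identity after the row swaps in the doubly-even construction:
with `p = n²/2` and `m = n/2`, for any column `k` with `1 ≤ k ≤ m`,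
`∑_{i=1}^{n/4} [(k-1)n + (2i-1)] + ∑_{i=1}^{n/4} [2p - kn + 2i]
 + ∑_{i=1}^{n/4} [2p - (k-1)n - (2i-1)] + ∑_{i=1}^{n/4} [kn - (2i-2)]
 = m(2p + 1) = n(n²+1)/2`. -/
theorem column_sum_identity (n k : ℕ) (h4 : n % 4 = 0) (hk1 : 1 ≤ k) (hkm : k ≤ n / 2) :
    (∑ i ∈ Finset.Icc 1 (n / 4), ((k - 1) * n + (2 * i - 1))) +
    (∑ i ∈ Finset.Icc 1 (n / 4), (2 * (n ^ 2 / 2) - k * n + 2 * i)) +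
    (∑ i ∈ Finset.Icc 1 (n / 4), (2 * (n ^ 2 / 2) - (k - 1) * n - (2 * i - 1))) +
    (∑ i ∈ Finset.Icc 1 (n / 4), (k * n - (2 * i - 2)))
      = (n / 2) * (2 * (n ^ 2 / 2) + 1) ∧
    (n / 2) * (2 * (n ^ 2 / 2) + 1) = n * (n ^ 2 + 1) / 2 := by
  obtain ⟨t, rfl⟩ : ∃ t, n = 4 * t := ⟨n / 4, by omega⟩
  obtain ⟨j, rfl⟩ : ∃ j, k = j + 1 := ⟨k - 1, by omega⟩
  have hdiv4 : 4 * t / 4 = t := by omega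
  have hdiv2 : 4 * t / 2 = 2 * t := by omega
  have hsq : (4 * t) ^ 2 / 2 = 8 * (t * t) := by
    rw [show (4 * t) ^ 2 = 2 * (8 * (t * t)) by ring, Nat.mul_div_cancel_left _ two_pos]
  have hj : j + 1 ≤ 2 * t := by omega
  simp only [hdiv4, hdiv2, hsq, Nat.add_sub_cancel]
  rw [← Finset.sum_add_distrib, ← Finset.sum_add_distrib, ← Finset.sum_add_distrib]
  have key : ∀ i ∈ Finset.Icc 1 t,
      (j * (4 * t) + (2 * i - 1) + (2 * (8 * (t * t)) - (j + 1) * (4 * t) + 2 * i) +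
        (2 * (8 * (t * t)) - j * (4 * t) - (2 * i - 1)) + ((j + 1) * (4 * t) - (2 * i - 2)))
      = 32 * (t * t) + 2 := by
    intro i hi
    simp only [Finset.mem_Icc] at hi
    have e : (j + 1) * (4 * t) = j * (4 * t) + 4 * t := by ring
    have ht : t ≤ t * t := Nat.le_mul_of_pos_left t (by omega)
    have h8 : j * (4 * t) + 4 * t ≤ 8 * (t * t) := by nlinarith
    rw [e]
    generalize j * (4 * t) = a at h8 ⊢
    generalize t * t = b at h8 ht ⊢
    omega
  rw [Finset.sum_congr rfl key, Finset.sum_const, Nat.card_Icc, smul_eq_mul]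
  constructor
  · have : t + 1 - 1 = t := by omega
    rw [this]; ring
  · rw [show 4 * t * ((4 * t) ^ 2 + 1) = 2 * (2 * t * (2 * (8 * (t * t)) + 1)) by ring,
      Nat.mul_div_cancel_left _ two_pos]
end
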